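/- Let k ≤ n be natural numbers with k ≥ 1. In the polynomial ring in variables x_1,...,x_n, the ideal generated by {e_1(x_1,...,x_n), e_k(x_1,...,x_n)} equals the ideal generated by {e_1(x_1,...,x_n), e_1(x_1,...,x_{n-1})·e_{k-1}(x_1,...,x_{n-1}) − e_k(x_1,...,x_{n-1})}. -/

import Mathlib

open MvPolynomial Finset

/-- Elementary symmetric polynomial of degree `k` in the first `m` variables `x_1,…,x_m`
(0-indexed: the variables `X i` with `(i : ℕ) < m`), viewed in the polynomial ring in
`n` variables. It is `1` for `k = 0` and `0` for `k > m`. -/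
noncomputable def esymb (R : Type) [CommRing R] (n m k : ℕ) : MvPolynomial (Fin n) R :=
  ∑ S ∈ (Finset.univ.filter (fun i : Fin n => (i : ℕ) < m)).powersetCard k, ∏ i ∈ S, X i

/-- Complete homogeneous symmetric polynomial of degree `k` in the first `m` variables
`x_1,…,x_m` (0-indexed: the variables `X i` with `(i : ℕ) < m`), viewed in the polynomial
ring in `n` variables. It is `1` for `k = 0` and, for `k > 0`, it is `0` when `m = 0`. -/
noncomputable def hsymb (R : Type) [CommRing R] (n m k : ℕ) : MvPolynomial (Fin n) R :=
  ∑ μ ∈ (Finset.univ.filter (fun i : Fin n => (i : ℕ) < m)).sym k,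
    ((μ : Multiset (Fin n)).map X).prod
lemma esymb_rec (R : Type) [CommRing R] (n m k : ℕ) (hm : m < n) :
    esymb R n (m + 1) (k + 1) =
      esymb R n m (k + 1) + X (⟨m, hm⟩ : Fin n) * esymb R n m k := by
  have hfilter : (Finset.univ.filter (fun i : Fin n => (i : ℕ) < m + 1)) =
      insert (⟨m, hm⟩ : Fin n) (Finset.univ.filter (fun i : Fin n => (i : ℕ) < m)) := by
    ext i
    simp [Nat.lt_succ_iff_lt_or_eq, Fin.ext_iff, or_comm]
    omega
  have hnm : (⟨m, hm⟩ : Fin n) ∉ Finset.univ.filter (fun i : Fin n => (i : ℕ) < m) := by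
    simp
  have hsub : ∀ t ∈ (Finset.univ.filter (fun i : Fin n => (i : ℕ) < m)).powersetCard k,
      (⟨m, hm⟩ : Fin n) ∉ t := fun t ht h =>
    hnm ((Finset.mem_powersetCard.mp ht).1 h)
  rw [esymb, hfilter, powersetCard_succ_insert hnm, sum_union, sum_image]
  · rw [esymb, esymb, mul_sum]
    congr 1
    exact sum_congr rfl fun t ht => prod_insert (hsub t ht)
  · intro t ht u hu h
    have := congrArg (Finset.erase · (⟨m, hm⟩ : Fin n)) h
    simpa [Finset.erase_insert (hsub t ht), Finset.erase_insert (hsub u hu)] using this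
  · rw [disjoint_right]
    intro t ht
    simp only [mem_image] at ht
    obtain ⟨u, hu, rfl⟩ := ht
    intro hmem
    exact hnm ((Finset.mem_powersetCard.mp hmem).1 (mem_insert_self _ _))

/-- ⟨e_1(x_1,…,x_n), e_k(x_1,…,x_n)⟩
 = ⟨e_1(x_1,…,x_n), e_1(x_1,…,x_{n-1}) e_{k-1}(x_1,…,x_{n-1}) − e_k(x_1,…,x_{n-1})⟩. -/
theorem stmt10 (R : Type) [CommRing R] (n k : ℕ) (hk : 1 ≤ k) (hkn : k ≤ n) :
    Ideal.span {esymb R n n 1, esymb R n n k} =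
      Ideal.span {esymb R n n 1,
        esymb R n (n - 1) 1 * esymb R n (n - 1) (k - 1) - esymb R n (n - 1) k} := by
  have hn : 1 ≤ n := le_trans hk hkn
  have hm : n - 1 < n := Nat.sub_lt hn one_pos
  have h0 : esymb R n (n - 1) 0 = 1 := by simp [esymb]
  have hA : esymb R n n 1 = esymb R n (n - 1) 1 + X (⟨n - 1, hm⟩ : Fin n) := by
    have h := esymb_rec R n (n - 1) 0 hm
    rw [Nat.sub_add_cancel hn] at h
    rw [h, h0, mul_one]
  have hB : esymb R n n k
      = esymb R n (n - 1) k + X (⟨n - 1, hm⟩ : Fin n) * esymb R n (n - 1) (k - 1) := by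
    have h := esymb_rec R n (n - 1) (k - 1) hm
    rwa [Nat.sub_add_cancel hn, Nat.sub_add_cancel hk] at h
  have key : esymb R n (n - 1) 1 * esymb R n (n - 1) (k - 1) - esymb R n (n - 1) k
      = esymb R n n 1 * esymb R n (n - 1) (k - 1) - esymb R n n k := by
    rw [hA, hB]; ring
  apply le_antisymm <;> rw [Ideal.span_le] <;> rintro p hp <;>
    simp only [Set.mem_insert_iff, Set.mem_singleton_iff] at hp
  · rcases hp with rfl | rfl
    · exact Ideal.subset_span (Set.mem_insert _ _)
    · have h1 : esymb R n n k = esymb R n n 1 * esymb R n (n - 1) (k - 1)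
          - (esymb R n (n - 1) 1 * esymb R n (n - 1) (k - 1) - esymb R n (n - 1) k) := by
        rw [key]; ring
      rw [h1]
      exact sub_mem (Ideal.mul_mem_right _ _ (Ideal.subset_span (Set.mem_insert _ _)))
        (Ideal.subset_span (Set.mem_insert_of_mem _ rfl))
  · rcases hp with rfl | rfl
    · exact Ideal.subset_span (Set.mem_insert _ _)
    · rw [key]
      exact sub_mem (Ideal.mul_mem_right _ _ (Ideal.subset_span (Set.mem_insert _ _)))
        (Ideal.subset_span (Set.mem_insert_of_mem _ rfl))
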